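/- Let ξ₀, ξ₁, …, ξ_{n+1} span a fan, with n ≥ 1. Then there exists an index i with 0 < i < n+1 such that ξ_i = ξ_{i−1} + ξ_{i+1} and such that the sequence of n+1 vectors obtained by deleting ξ_i, namely ξ₀, …, ξ_{i−1}, ξ_{i+1}, …, ξ_{n+1}, again spans a fan. (In other words, every fan consisting of n+1 cones is a subdivision of a fan consisting of n cones, obtained by splitting one cone σ[ξ,ν] into the two cones σ[ξ,ξ+ν] and σ[ξ+ν,ν].) -/
import Mathlib


/-- det(ξ,ν) = ξ₁ν₂ − ξ₂ν₁ for ξ, ν ∈ ℤ². -/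
def det2 (ξ ν : ℤ × ℤ) : ℤ := ξ.1 * ν.2 - ξ.2 * ν.1

/-- A sequence ξ₀, …, ξₙ of vectors in ℤ² with nonnegative coordinates spans a fan if
ξ₀ = (1,0), ξₙ = (0,1) and det(ξ_{i−1}, ξ_i) = 1 for all 1 ≤ i ≤ n. -/
def SpansFan (n : ℕ) (ξ : ℕ → ℤ × ℤ) : Prop :=
  (∀ i ≤ n, 0 ≤ (ξ i).1 ∧ 0 ≤ (ξ i).2) ∧
  ξ 0 = (1, 0) ∧ ξ n = (0, 1) ∧
  ∀ i, 1 ≤ i → i ≤ n → det2 (ξ (i - 1)) (ξ i) = 1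

/-- If ξ₀, …, ξ_{n+1} span a fan (n ≥ 1), then some ξ_i with 0 < i < n+1 satisfies
ξ_i = ξ_{i−1} + ξ_{i+1}, and deleting ξ_i yields a sequence of n+1 vectors which
again spans a fan: every fan with n+1 cones is a subdivision of a fan with n cones. -/
theorem fan_is_subdivision (n : ℕ) (ξ : ℕ → ℤ × ℤ) (hfan : SpansFan (n + 1) ξ) (hn : 1 ≤ n) :
    ∃ i, 0 < i ∧ i < n + 1 ∧ ξ i = ξ (i - 1) + ξ (i + 1) ∧
      SpansFan n (fun j => if j < i then ξ j else ξ (j + 1)) := by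
  obtain ⟨hnn, h0, hN, hdet⟩ := hfan
  -- every vector has coordinate sum at least 1
  have hns : ∀ j, j ≤ n + 1 → 1 ≤ (ξ j).1 + (ξ j).2 := by
    intro j hj
    rcases Nat.eq_zero_or_pos j with rfl | hjpos
    · rw [h0]; norm_num
    · have hd := hdet j hjpos hj
      have h1 := hnn j hj
      simp only [det2] at hd
      by_contra hcon
      push_neg at hcon
      have e1 : (ξ j).1 = 0 := by omega
      have e2 : (ξ j).2 = 0 := by omega
      rw [e1, e2] at hd; simp at hd
  -- ξ 1 has coordinate sum at least 2
  have hs12 : 2 ≤ (ξ 1).1 + (ξ 1).2 := by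
    have hd1 := hdet 1 le_rfl (by omega)
    have hd2 := hdet 2 (by omega) (by omega)
    have h1 := hnn 1 (by omega)
    have h2 := hnn 2 (by omega)
    simp only [show (1:ℕ) - 1 = 0 from rfl, show (2:ℕ) - 1 = 1 from rfl, det2, h0] at hd1 hd2
    norm_num at hd1
    nlinarith [h1.1, h1.2, h2.1, h2.2]
  -- pick an index maximizing the coordinate sum
  obtain ⟨i, hiIcc, himax⟩ := Finset.exists_max_image (Finset.Icc 0 (n + 1))
    (fun j => (ξ j).1 + (ξ j).2) ⟨1, Finset.mem_Icc.mpr ⟨Nat.zero_le _, by omega⟩⟩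
  simp only [Finset.mem_Icc] at hiIcc
  have hmax : ∀ j, j ≤ n + 1 → (ξ j).1 + (ξ j).2 ≤ (ξ i).1 + (ξ i).2 := by
    intro j hj
    exact himax j (Finset.mem_Icc.mpr ⟨Nat.zero_le _, hj⟩)
  have hsi : 2 ≤ (ξ i).1 + (ξ i).2 := le_trans hs12 (hmax 1 (by omega))
  have hi1 : 1 ≤ i := by
    rcases Nat.eq_zero_or_pos i with rfl | h
    · rw [h0] at hsi; norm_num at hsi
    · exact h
  have hin : i ≤ n := by
    by_contra h
    push_neg at h
    have hieq : i = n + 1 := by omega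
    rw [hieq, hN] at hsi; norm_num at hsi
  -- key determinant relations
  have hda := hdet i hi1 (by omega)
  have hdb := hdet (i + 1) (by omega) (by omega)
  rw [Nat.add_sub_cancel] at hdb
  simp only [det2] at hda hdb
  set a := ξ (i - 1) with ha
  set b := ξ i with hb
  set c := ξ (i + 1) with hc
  set d := a.1 * c.2 - a.2 * c.1 with hd
  have hk1 : a.1 + c.1 = d * b.1 := by
    rw [hd]; linear_combination (-c.1) * hda + (-a.1) * hdb
  have hk2 : a.2 + c.2 = d * b.2 := by
    rw [hd]; linear_combination (-c.2) * hda + (-a.2) * hdb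
  have ha1 : 1 ≤ a.1 + a.2 := hns (i - 1) (by omega)
  have hc1 : 1 ≤ c.1 + c.2 := hns (i + 1) (by omega)
  have hale : a.1 + a.2 ≤ b.1 + b.2 := hmax (i - 1) (by omega)
  have hcle : c.1 + c.2 ≤ b.1 + b.2 := hmax (i + 1) (by omega)
  have hsum : (a.1 + a.2) + (c.1 + c.2) = d * (b.1 + b.2) := by
    linear_combination hk1 + hk2
  have hdge : 1 ≤ d := by nlinarith
  have hdle : d ≤ 2 := by nlinarith
  have hdne2 : d ≠ 2 := by
    intro h2
    have heq : a.1 + a.2 = b.1 + b.2 := by rw [h2] at hsum; linarith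
    have hdvd : (b.1 + b.2) ∣ 1 :=
      ⟨a.1 - b.1, by linear_combination (-1 : ℤ) * hda + (-b.1) * heq⟩
    have := Int.le_of_dvd one_pos hdvd
    omega
  have hd1' : d = 1 := by omega
  have hbeq : ξ i = ξ (i - 1) + ξ (i + 1) := by
    rw [hd1'] at hk1 hk2
    have e1 : b.1 = a.1 + c.1 := by linarith
    have e2 : b.2 = a.2 + c.2 := by linarith
    show b = a + c
    exact Prod.ext_iff.mpr ⟨e1, e2⟩
  refine ⟨i, by omega, by omega, hbeq, ?_, ?_, ?_, ?_⟩
  · intro j hj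
    dsimp only
    split_ifs with h
    · exact hnn j (by omega)
    · exact hnn (j + 1) (by omega)
  · show (if 0 < i then ξ 0 else ξ 1) = (1, 0)
    rw [if_pos (by omega)]; exact h0
  · show (if n < i then ξ n else ξ (n + 1)) = (0, 1)
    rw [if_neg (by omega)]; exact hN
  · intro j hj1 hjn
    show det2 (if j - 1 < i then ξ (j - 1) else ξ (j - 1 + 1))
        (if j < i then ξ j else ξ (j + 1)) = 1
    rcases lt_trichotomy j i with h | h | h
    · rw [if_pos (by omega), if_pos h]
      exact hdet j hj1 (by omega)
    · subst h
      rw [if_pos (by omega), if_neg (by omega)]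
      show det2 a c = 1
      simp only [det2]
      linarith [hd1', hd]
    · rw [if_neg (by omega), if_neg (by omega)]
      have hj' : j - 1 + 1 = j := by omega
      rw [hj']
      have hdj := hdet (j + 1) (by omega) (by omega)
      rwa [Nat.add_sub_cancel] at hdj
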